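/- Let λ ∈ ℝ, let μ : ℝ → ℝ and φ : ℝ → ℝ be differentiable, let ψ : ℝ → ℝ be twice differentiable, and let ℱ : ℝ × ℝ → ℝ be differentiable with ℱ(x,·) Lebesgue-integrable over ℝ for each x. If for all (x,v) ∈ ℝ²: λℱ(x,v) + v ∂ₓℱ(x,v) − φ'(x) ∂ᵥℱ(x,v) = −ψ'(x) v μ'(½v² + φ(x)) and ψ''(x) = ∫_ℝ ℱ(x,v) dv, then the function G(x,v) := ℱ(x,−v) satisfies for all (x,v) ∈ ℝ²: (−λ)G(x,v) + v ∂ₓG(x,v) − φ'(x) ∂ᵥG(x,v) = −ψ'(x) v μ'(½v² + φ(x)) and ψ''(x) = ∫_ℝ G(x,v) dv. Consequently the linearized system possesses an eigenmode with exponent λ if and only if it possesses one with exponent −λ. -/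

import Mathlib

open MeasureTheory

/-- An eigenmode of the linearized Vlasov–Poisson perturbation equations with exponent `lam`:
a pair `(F, ψ)` (with field perturbation `β = e^{λt}(−ψ')`) satisfying
`λF + v ∂ₓF − φ' ∂ᵥF = −ψ' v μ'(½v² + φ)` and `ψ'' = ∫ F dv`. -/
def IsEigenmode (μ φ : ℝ → ℝ) (lam : ℝ) (F : ℝ → ℝ → ℝ) (ψ : ℝ → ℝ) : Prop :=
  Differentiable ℝ (fun p : ℝ × ℝ => F p.1 p.2) ∧
  Differentiable ℝ ψ ∧ Differentiable ℝ (deriv ψ) ∧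
  (∀ x, Integrable (F x)) ∧
  (∀ x v, lam * F x v + v * deriv (fun x' => F x' v) x - deriv φ x * deriv (F x) v
      = - deriv ψ x * v * deriv μ (v ^ 2 / 2 + φ x)) ∧
  (∀ x, deriv (deriv ψ) x = ∫ v : ℝ, F x v)

lemma eigenmode_reflect {μ φ : ℝ → ℝ} {lam : ℝ} {F : ℝ → ℝ → ℝ} {ψ : ℝ → ℝ}
    (h : IsEigenmode μ φ lam F ψ) :
    IsEigenmode μ φ (-lam) (fun x v => F x (-v)) ψ := by
  obtain ⟨hF, hψ, hψ', hint, h1, h2⟩ := h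
  refine ⟨?_, hψ, hψ', ?_, ?_, ?_⟩
  · exact hF.comp (Differentiable.prodMk differentiable_fst (Differentiable.neg differentiable_snd))
  · exact fun x => (hint x).comp_neg
  · intro x v
    have key := h1 x (-v)
    have hd : deriv (fun w => F x (-w)) v = -deriv (F x) (-v) := deriv_comp_neg (F x) v
    simp only [neg_neg, neg_sq] at key ⊢
    rw [show (fun x' => F x' (- v)) = (fun x' => F x' (-v)) from rfl, hd]
    nlinarith [key]
  · intro x
    rw [h2 x]
    exact (MeasureTheory.integral_neg_eq_self (F x) _).symm

/-- **Modes of the linearized system occur in pairs of opposite exponent.**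
If `(F, ψ)` is an eigenmode with exponent `λ`, then `G(x,v) := F(x,−v)` together with the
same `ψ` is an eigenmode with exponent `−λ`; consequently the linearized system possesses
an eigenmode with exponent `λ` if and only if it possesses one with exponent `−λ`. -/
theorem eigenmode_reflection
    (lam : ℝ) (μ φ : ℝ → ℝ)
    (hμ : Differentiable ℝ μ) (hφ : Differentiable ℝ φ)
    (ψ : ℝ → ℝ) (hψ : Differentiable ℝ ψ) (hψ' : Differentiable ℝ (deriv ψ))
    (F : ℝ → ℝ → ℝ)
    (hF : Differentiable ℝ (fun p : ℝ × ℝ => F p.1 p.2))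
    (hFint : ∀ x, Integrable (F x))
    (heq1 : ∀ x v, lam * F x v + v * deriv (fun x' => F x' v) x
        - deriv φ x * deriv (F x) v = - deriv ψ x * v * deriv μ (v ^ 2 / 2 + φ x))
    (heq2 : ∀ x, deriv (deriv ψ) x = ∫ v : ℝ, F x v) :
    ((∀ x v, (-lam) * F x (-v) + v * deriv (fun x' => F x' (-v)) x
        - deriv φ x * deriv (fun w => F x (-w)) v
        = - deriv ψ x * v * deriv μ (v ^ 2 / 2 + φ x)) ∧
     (∀ x, deriv (deriv ψ) x = ∫ v : ℝ, F x (-v))) ∧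
    ((∃ (F' : ℝ → ℝ → ℝ) (ψ' : ℝ → ℝ), IsEigenmode μ φ lam F' ψ') ↔
     (∃ (F' : ℝ → ℝ → ℝ) (ψ' : ℝ → ℝ), IsEigenmode μ φ (-lam) F' ψ')) := by
  have hmode : IsEigenmode μ φ lam F ψ := ⟨hF, hψ, hψ', hFint, heq1, heq2⟩
  have hrefl := eigenmode_reflect hmode
  obtain ⟨_, _, _, _, h1, h2⟩ := hrefl
  refine ⟨⟨h1, h2⟩, ?_⟩
  constructor
  · rintro ⟨F', ψ', h⟩
    exact ⟨_, _, eigenmode_reflect h⟩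
  · rintro ⟨F', ψ', h⟩
    have := eigenmode_reflect h
    rw [neg_neg] at this
    exact ⟨_, _, this⟩
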